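/- (Hille-type implicit function theorem.) Let a : ℕ → ℕ → ℂ satisfy a(0,0) = 0 and a(0,1) = 0, and suppose that for all real X ≥ 0 and Y ≥ 0 the family (m,n) ↦ ‖a(m,n)‖·X^m·Y^n is summable over ℕ × ℕ. Define ψ(x,y) = ∑_{(m,n)} a(m,n)·x^m·y^n for x, y ∈ ℂ and Ψ(X,Y) = ∑_{(m,n)} ‖a(m,n)‖·X^m·Y^n for X, Y ≥ 0. Suppose X* > 0 and Y* ≥ 0 satisfy Ψ(X*, Y*) ≤ Y*. Then there exists a function φ : ℂ → ℂ that is analytic on the open ball {x : ‖x‖ < X*}, with φ(0) = 0, such that for every x with ‖x‖ < X*: φ(x) = ψ(x, φ(x)) and ‖φ(x)‖ ≤ Y*. -/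

import Mathlib

open scoped BigOperators

/-- The double power series `ψ(x, y) = ∑ a(m,n) xᵐ yⁿ`. -/
noncomputable def psiFun (a : ℕ → ℕ → ℂ) (x y : ℂ) : ℂ :=
  ∑' mn : ℕ × ℕ, a mn.1 mn.2 * x ^ mn.1 * y ^ mn.2

/-- The comparison (majorant) series `Ψ(X, Y) = ∑ ‖a(m,n)‖ Xᵐ Yⁿ`. -/
noncomputable def PsiFun (a : ℕ → ℕ → ℂ) (X Y : ℝ) : ℝ :=
  ∑' mn : ℕ × ℕ, ‖a mn.1 mn.2‖ * X ^ mn.1 * Y ^ mn.2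

/-- Auxiliary: `‖y^n - y'^n‖ ≤ Y^n - Y'^n` under majorant hypotheses. -/
lemma hille_pow_diff {y y' : ℂ} {Y Y' : ℝ} (hy : ‖y‖ ≤ Y) (hy' : ‖y'‖ ≤ Y')
    (hd : ‖y - y'‖ ≤ Y - Y') (n : ℕ) : ‖y ^ n - y' ^ n‖ ≤ Y ^ n - Y' ^ n := by
  have hY' : 0 ≤ Y' := le_trans (norm_nonneg _) hy'
  have hY : 0 ≤ Y := le_trans (norm_nonneg _) hy
  have hY'Y : Y' ≤ Y := by have := norm_nonneg (y - y'); linarith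
  induction n with
  | zero => simp
  | succ n ih =>
    have key : y ^ (n + 1) - y' ^ (n + 1) = y ^ n * (y - y') + (y ^ n - y' ^ n) * y' := by ring
    rw [key]
    have h1 : ‖y ^ n * (y - y') + (y ^ n - y' ^ n) * y'‖
        ≤ ‖y‖ ^ n * ‖y - y'‖ + ‖y ^ n - y' ^ n‖ * ‖y'‖ := by
      refine (norm_add_le _ _).trans ?_
      simp [norm_mul, norm_pow]
    refine h1.trans ?_
    have h2 : ‖y‖ ^ n ≤ Y ^ n := pow_le_pow_left₀ (norm_nonneg _) hy n
    have h3 : Y' ^ n ≤ Y ^ n := pow_le_pow_left₀ hY' hY'Y n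
    have h4 : 0 ≤ ‖y - y'‖ := norm_nonneg _
    have e1 : ‖y‖ ^ n * ‖y - y'‖ ≤ Y ^ n * (Y - Y') :=
      mul_le_mul h2 hd h4 (pow_nonneg hY n)
    have e2 : ‖y ^ n - y' ^ n‖ * ‖y'‖ ≤ (Y ^ n - Y' ^ n) * Y' :=
      mul_le_mul ih hy' (norm_nonneg _) (by linarith)
    calc ‖y‖ ^ n * ‖y - y'‖ + ‖y ^ n - y' ^ n‖ * ‖y'‖
        ≤ Y ^ n * (Y - Y') + (Y ^ n - Y' ^ n) * Y' := add_le_add e1 e2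
      _ = Y ^ (n + 1) - Y' ^ (n + 1) := by ring

/-- Auxiliary: Lipschitz-type bound `‖y^n - y'^n‖ ≤ (1+Y)^n ‖y - y'‖`. -/
lemma hille_pow_lip {y y' : ℂ} {Y : ℝ} (hy : ‖y‖ ≤ Y) (hy' : ‖y'‖ ≤ Y) (n : ℕ) :
    ‖y ^ n - y' ^ n‖ ≤ (1 + Y) ^ n * ‖y - y'‖ := by
  have hY : 0 ≤ Y := le_trans (norm_nonneg _) hy
  induction n with
  | zero => simpa using norm_nonneg (y - y')
  | succ n ih =>
    have key : y ^ (n + 1) - y' ^ (n + 1) = y ^ n * (y - y') + (y ^ n - y' ^ n) * y' := by ring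
    rw [key]
    have h1 : ‖y ^ n * (y - y') + (y ^ n - y' ^ n) * y'‖
        ≤ ‖y‖ ^ n * ‖y - y'‖ + ‖y ^ n - y' ^ n‖ * ‖y'‖ := by
      refine (norm_add_le _ _).trans ?_
      simp [norm_mul, norm_pow]
    refine h1.trans ?_
    have h2 : ‖y‖ ^ n ≤ (1 + Y) ^ n := pow_le_pow_left₀ (norm_nonneg _) (by linarith) n
    have h4 : 0 ≤ ‖y - y'‖ := norm_nonneg _
    have e1 : ‖y‖ ^ n * ‖y - y'‖ ≤ (1 + Y) ^ n * ‖y - y'‖ :=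
      mul_le_mul_of_nonneg_right h2 h4
    have e2 : ‖y ^ n - y' ^ n‖ * ‖y'‖ ≤ (1 + Y) ^ n * ‖y - y'‖ * Y :=
      mul_le_mul ih hy' (norm_nonneg _) (by positivity)
    calc ‖y‖ ^ n * ‖y - y'‖ + ‖y ^ n - y' ^ n‖ * ‖y'‖
        ≤ (1 + Y) ^ n * ‖y - y'‖ + (1 + Y) ^ n * ‖y - y'‖ * Y := add_le_add e1 e2
      _ = (1 + Y) ^ (n + 1) * ‖y - y'‖ := by ring

/-- The Picard iteration sequence for the Hille implicit function theorem. -/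
noncomputable def hilleSeq (a : ℕ → ℕ → ℂ) : ℕ → ℂ → ℂ
  | 0 => fun _ => 0
  | (k + 1) => fun x => psiFun a x (hilleSeq a k x)

/-- The scalar majorant iteration sequence. -/
noncomputable def hilleMaj (a : ℕ → ℕ → ℂ) (X : ℝ) : ℕ → ℝ
  | 0 => 0
  | (k + 1) => PsiFun a X (hilleMaj a X k)

/-- Hille-type implicit function theorem: if `a(0,0) = a(0,1) = 0`, the majorant
double series converges for all `X, Y ≥ 0`, and `Ψ(X*, Y*) ≤ Y*` for some
`X* > 0`, `Y* ≥ 0`, then there is a function `φ`, analytic on the ball of radius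
`X*` with `φ(0) = 0`, satisfying `φ(x) = ψ(x, φ(x))` and `‖φ(x)‖ ≤ Y*` for all
`x` with `‖x‖ < X*`. -/
theorem stmt_18 (a : ℕ → ℕ → ℂ)
    (ha00 : a 0 0 = 0) (ha01 : a 0 1 = 0)
    (hsum : ∀ X Y : ℝ, 0 ≤ X → 0 ≤ Y →
      Summable (fun mn : ℕ × ℕ => ‖a mn.1 mn.2‖ * X ^ mn.1 * Y ^ mn.2))
    (Xstar : ℝ) (hXstar : 0 < Xstar) (Ystar : ℝ) (hYstar : 0 ≤ Ystar)
    (hfix : PsiFun a Xstar Ystar ≤ Ystar) :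
    ∃ φ : ℂ → ℂ, AnalyticOnNhd ℂ φ (Metric.ball (0 : ℂ) Xstar) ∧ φ 0 = 0 ∧
      ∀ x : ℂ, ‖x‖ < Xstar → φ x = psiFun a x (φ x) ∧ ‖φ x‖ ≤ Ystar := by
  classical
  have hXnn : (0 : ℝ) ≤ Xstar := hXstar.le
  set B := Metric.ball (0 : ℂ) Xstar with hB
  -- summability of the complex family
  have hSc : ∀ x y : ℂ, Summable (fun mn : ℕ × ℕ => a mn.1 mn.2 * x ^ mn.1 * y ^ mn.2) := by
    intro x y
    refine Summable.of_norm_bounded (hsum ‖x‖ ‖y‖ (norm_nonneg x) (norm_nonneg y)) ?_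
    intro mn
    simp [norm_mul, norm_pow]
  -- monotonicity of the majorant in Y
  have hPsiMono : ∀ X Y Y' : ℝ, 0 ≤ X → 0 ≤ Y → Y ≤ Y' →
      PsiFun a X Y ≤ PsiFun a X Y' := by
    intro X Y Y' hX hY hYY
    refine Summable.tsum_le_tsum (fun mn => ?_) (hsum X Y hX hY) (hsum X Y' hX (hY.trans hYY))
    gcongr
  have hPsiNonneg : ∀ X Y : ℝ, 0 ≤ X → 0 ≤ Y → 0 ≤ PsiFun a X Y := by
    intro X Y hX hY
    exact tsum_nonneg fun mn => by positivity
  -- basic bound for ψ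
  have hpsi_le : ∀ (x y : ℂ) (X Y : ℝ), ‖x‖ ≤ X → ‖y‖ ≤ Y → ‖psiFun a x y‖ ≤ PsiFun a X Y := by
    intro x y X Y hx hy
    have hX : 0 ≤ X := (norm_nonneg x).trans hx
    have hY : 0 ≤ Y := (norm_nonneg y).trans hy
    have hsn : Summable (fun mn : ℕ × ℕ => ‖a mn.1 mn.2 * x ^ mn.1 * y ^ mn.2‖) :=
      (hsum ‖x‖ ‖y‖ (norm_nonneg x) (norm_nonneg y)).congr
        (fun mn => by simp [norm_mul, norm_pow])
    refine (norm_tsum_le_tsum_norm hsn).trans ?_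
    refine Summable.tsum_le_tsum (fun mn => ?_) hsn (hsum X Y hX hY)
    simp only [norm_mul, norm_pow]
    gcongr <;> simp [norm_nonneg]
  -- difference bound (majorant comparison)
  have hdiffA : ∀ (x y y' : ℂ) (X Y Y' : ℝ), ‖x‖ ≤ X → ‖y‖ ≤ Y → ‖y'‖ ≤ Y' →
      ‖y - y'‖ ≤ Y - Y' →
      ‖psiFun a x y - psiFun a x y'‖ ≤ PsiFun a X Y - PsiFun a X Y' := by
    intro x y y' X Y Y' hx hy hy' hd
    have hX : 0 ≤ X := (norm_nonneg x).trans hx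
    have hY' : 0 ≤ Y' := (norm_nonneg y').trans hy'
    have hY : 0 ≤ Y := (norm_nonneg y).trans hy
    have h1 : psiFun a x y - psiFun a x y'
        = ∑' mn : ℕ × ℕ, a mn.1 mn.2 * x ^ mn.1 * (y ^ mn.2 - y' ^ mn.2) := by
      rw [psiFun, psiFun, ← Summable.tsum_sub (hSc x y) (hSc x y')]
      exact tsum_congr fun mn => by ring
    have hsmaj : Summable (fun mn : ℕ × ℕ =>
        ‖a mn.1 mn.2‖ * X ^ mn.1 * (Y ^ mn.2 - Y' ^ mn.2)) := by
      refine ((hsum X Y hX hY).sub (hsum X Y' hX hY')).congr fun mn => by ring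
    have hterm : ∀ mn : ℕ × ℕ,
        ‖a mn.1 mn.2 * x ^ mn.1 * (y ^ mn.2 - y' ^ mn.2)‖
          ≤ ‖a mn.1 mn.2‖ * X ^ mn.1 * (Y ^ mn.2 - Y' ^ mn.2) := by
      intro mn
      simp only [norm_mul, norm_pow]
      exact mul_le_mul
        (mul_le_mul_of_nonneg_left (pow_le_pow_left₀ (norm_nonneg x) hx _) (norm_nonneg _))
        (hille_pow_diff hy hy' hd mn.2) (norm_nonneg _) (by positivity)
    have hsn : Summable (fun mn : ℕ × ℕ =>
        ‖a mn.1 mn.2 * x ^ mn.1 * (y ^ mn.2 - y' ^ mn.2)‖) :=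
      Summable.of_nonneg_of_le (fun mn => norm_nonneg _) hterm hsmaj
    rw [h1]
    refine (norm_tsum_le_tsum_norm hsn).trans ?_
    refine (Summable.tsum_le_tsum hterm hsn hsmaj).trans ?_
    rw [PsiFun, PsiFun, ← Summable.tsum_sub (hsum X Y hX hY) (hsum X Y' hX hY')]
    exact le_of_eq (tsum_congr fun mn => by ring)
  -- Lipschitz bound on the ball of radius Y*
  set K := PsiFun a Xstar (1 + Ystar) with hK
  have hlip : ∀ x y y' : ℂ, ‖x‖ ≤ Xstar → ‖y‖ ≤ Ystar → ‖y'‖ ≤ Ystar →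
      ‖psiFun a x y - psiFun a x y'‖ ≤ K * ‖y - y'‖ := by
    intro x y y' hx hy hy'
    have h1 : psiFun a x y - psiFun a x y'
        = ∑' mn : ℕ × ℕ, a mn.1 mn.2 * x ^ mn.1 * (y ^ mn.2 - y' ^ mn.2) := by
      rw [psiFun, psiFun, ← Summable.tsum_sub (hSc x y) (hSc x y')]
      exact tsum_congr fun mn => by ring
    have hsmaj : Summable (fun mn : ℕ × ℕ =>
        ‖a mn.1 mn.2‖ * Xstar ^ mn.1 * (1 + Ystar) ^ mn.2 * ‖y - y'‖) :=
      (hsum Xstar (1 + Ystar) hXnn (by linarith)).mul_right _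
    have hterm : ∀ mn : ℕ × ℕ,
        ‖a mn.1 mn.2 * x ^ mn.1 * (y ^ mn.2 - y' ^ mn.2)‖
          ≤ ‖a mn.1 mn.2‖ * Xstar ^ mn.1 * (1 + Ystar) ^ mn.2 * ‖y - y'‖ := by
      intro mn
      simp only [norm_mul, norm_pow]
      calc ‖a mn.1 mn.2‖ * ‖x‖ ^ mn.1 * ‖y ^ mn.2 - y' ^ mn.2‖
          ≤ ‖a mn.1 mn.2‖ * Xstar ^ mn.1 * ((1 + Ystar) ^ mn.2 * ‖y - y'‖) :=
            mul_le_mul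
              (mul_le_mul_of_nonneg_left (pow_le_pow_left₀ (norm_nonneg x) hx _)
                (norm_nonneg _))
              (hille_pow_lip hy hy' mn.2) (norm_nonneg _) (by positivity)
        _ = ‖a mn.1 mn.2‖ * Xstar ^ mn.1 * (1 + Ystar) ^ mn.2 * ‖y - y'‖ := by ring
    have hsn : Summable (fun mn : ℕ × ℕ =>
        ‖a mn.1 mn.2 * x ^ mn.1 * (y ^ mn.2 - y' ^ mn.2)‖) :=
      Summable.of_nonneg_of_le (fun mn => norm_nonneg _) hterm hsmaj
    rw [h1]
    refine (norm_tsum_le_tsum_norm hsn).trans ?_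
    refine (Summable.tsum_le_tsum hterm hsn hsmaj).trans ?_
    rw [hK, PsiFun, ← tsum_mul_right]
  -- majorant sequence properties
  set Ym : ℕ → ℝ := hilleMaj a Xstar with hYm
  have hYm0 : Ym 0 = 0 := rfl
  have hYmS : ∀ k, Ym (k + 1) = PsiFun a Xstar (Ym k) := fun k => rfl
  have hYmprop : ∀ k, 0 ≤ Ym k ∧ Ym k ≤ Ym (k + 1) ∧ Ym k ≤ Ystar := by
    intro k
    induction k with
    | zero =>
      refine ⟨le_refl _, ?_, hYstar⟩
      rw [hYm0, hYmS]
      exact hPsiNonneg _ _ hXnn (le_of_eq hYm0.symm)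
    | succ k ih =>
      obtain ⟨h0, h1, h2⟩ := ih
      have h0' : 0 ≤ Ym (k + 1) := by
        rw [hYmS]; exact hPsiNonneg _ _ hXnn h0
      refine ⟨h0', ?_, ?_⟩
      · rw [hYmS, hYmS]
        exact hPsiMono _ _ _ hXnn h0 h1
      · rw [hYmS]
        exact (hPsiMono _ _ _ hXnn h0 h2).trans hfix
  have hmono : Monotone Ym := monotone_nat_of_le_succ fun k => (hYmprop k).2.1
  have hbdd : ∀ k, Ym k ≤ Ystar := fun k => (hYmprop k).2.2
  set YL : ℝ := ⨆ k, Ym k with hYL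
  have hbddset : BddAbove (Set.range Ym) := ⟨Ystar, by rintro _ ⟨k, rfl⟩; exact hbdd k⟩
  have hYLt : Filter.Tendsto Ym Filter.atTop (nhds YL) := tendsto_atTop_ciSup hmono hbddset
  have hYmYL : ∀ k, Ym k ≤ YL := fun k => le_ciSup hbddset k
  -- the iteration sequence
  set F : ℕ → ℂ → ℂ := hilleSeq a with hF
  have hF0 : ∀ x, F 0 x = 0 := fun x => rfl
  have hFS : ∀ k x, F (k + 1) x = psiFun a x (F k x) := fun k x => rfl
  -- differentiability transfer
  have hdiffg : ∀ g : ℂ → ℂ, DifferentiableOn ℂ g B → (∀ x ∈ B, ‖g x‖ ≤ Ystar) →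
      DifferentiableOn ℂ (fun x => psiFun a x (g x)) B := by
    intro g hg hgb
    have : DifferentiableOn ℂ
        (fun x => ∑' mn : ℕ × ℕ, a mn.1 mn.2 * x ^ mn.1 * (g x) ^ mn.2) B := by
      refine Complex.differentiableOn_tsum_of_summable_norm (hsum Xstar Ystar hXnn hYstar)
        (fun mn => ?_) Metric.isOpen_ball (fun mn w hw => ?_)
      · exact ((differentiableOn_const _).mul
          ((differentiable_pow mn.1).differentiableOn)).mul (hg.pow mn.2)
      · have hw' : ‖w‖ < Xstar := by
          simpa [hB, Metric.mem_ball, dist_eq_norm] using hw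
        simp only [norm_mul, norm_pow]
        exact mul_le_mul
          (mul_le_mul_of_nonneg_left (pow_le_pow_left₀ (norm_nonneg w) hw'.le _)
            (norm_nonneg _))
          (pow_le_pow_left₀ (norm_nonneg _) (hgb w hw) _) (by positivity) (by positivity)
    simpa [psiFun] using this
  -- main induction on the sequence
  have hmain : ∀ k, DifferentiableOn ℂ (F k) B ∧ F k 0 = 0 ∧
      (∀ x, ‖x‖ < Xstar → ‖F k x‖ ≤ Ym k) ∧
      (∀ x, ‖x‖ < Xstar → ‖F (k + 1) x - F k x‖ ≤ Ym (k + 1) - Ym k) := by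
    intro k
    induction k with
    | zero =>
      refine ⟨?_, rfl, ?_, ?_⟩
      · show DifferentiableOn ℂ (fun _ => (0 : ℂ)) B
        exact differentiableOn_const 0
      · intro x hx; simp [hF0, hYm0]
      · intro x hx
        rw [hFS, hF0, hYmS, hYm0, sub_zero, sub_zero]
        exact hpsi_le x 0 Xstar 0 hx.le (by simp)
    | succ k ih =>
      obtain ⟨hdk, h0k, hbk, hck⟩ := ih
      have hbk' : ∀ x, ‖x‖ < Xstar → ‖F (k + 1) x‖ ≤ Ym (k + 1) := by
        intro x hx
        rw [hFS, hYmS]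
        exact hpsi_le x (F k x) Xstar (Ym k) hx.le (hbk x hx)
      refine ⟨?_, ?_, hbk', ?_⟩
      · have : DifferentiableOn ℂ (fun x => psiFun a x (F k x)) B :=
          hdiffg (F k) hdk (fun x hxB => (hbk x (by
            simpa [hB, Metric.mem_ball, dist_eq_norm] using hxB)).trans (hbdd k))
        exact this
      · rw [hFS, h0k]
        rw [psiFun]
        have hzero : ∀ mn : ℕ × ℕ, a mn.1 mn.2 * (0 : ℂ) ^ mn.1 * (0 : ℂ) ^ mn.2 = 0 := by
          rintro ⟨m, n⟩
          match m, n with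
          | 0, 0 => simpa using ha00
          | 0, (n + 1) => simp
          | (m + 1), n => simp
        exact (tsum_congr hzero).trans tsum_zero
      · intro x hx
        exact hdiffA x (F (k + 1) x) (F k x) Xstar (Ym (k + 1)) (Ym k) hx.le
          (hbk' x hx) (hbk x hx) (hck x hx)
  -- Cauchy estimates between indices
  have hFd : ∀ x, ‖x‖ < Xstar → ∀ N M, N ≤ M → ‖F M x - F N x‖ ≤ Ym M - Ym N := by
    intro x hx N M hNM
    induction M, hNM using Nat.le_induction with
    | base => simp
    | succ M hNM ih =>
      have h1 : ‖F (M + 1) x - F N x‖ ≤ ‖F (M + 1) x - F M x‖ + ‖F M x - F N x‖ := by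
        have := norm_add_le (F (M + 1) x - F M x) (F M x - F N x)
        simpa using this
      have h2 := (hmain M).2.2.2 x hx
      linarith
  -- summability of increments, hence pointwise convergence
  have hdsum : Summable (fun n => Ym (n + 1) - Ym n) := by
    refine summable_of_sum_range_le (c := Ystar) (fun n => by linarith [(hYmprop n).2.1])
      (fun n => ?_)
    rw [Finset.sum_range_sub (f := Ym)]
    rw [hYm0, sub_zero]
    exact hbdd n
  have hlim : ∀ x, ‖x‖ < Xstar → ∃ L, Filter.Tendsto (fun k => F k x) Filter.atTop (nhds L) := by
    intro x hx
    refine cauchySeq_tendsto_of_complete (cauchySeq_of_summable_dist ?_)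
    refine Summable.of_nonneg_of_le (fun n => dist_nonneg) (fun n => ?_) hdsum
    rw [dist_eq_norm, norm_sub_rev]
    exact (hmain n).2.2.2 x hx
  -- define φ
  set φ : ℂ → ℂ := fun x => if h : ‖x‖ < Xstar then (hlim x h).choose else 0 with hφ
  have hφt : ∀ x, (h : ‖x‖ < Xstar) →
      Filter.Tendsto (fun k => F k x) Filter.atTop (nhds (φ x)) := by
    intro x h
    have : φ x = (hlim x h).choose := by rw [hφ]; exact dif_pos h
    rw [this]
    exact (hlim x h).choose_spec
  -- norm bound on φ
  have hφb : ∀ x, ‖x‖ < Xstar → ‖φ x‖ ≤ Ystar := by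
    intro x hx
    refine le_of_tendsto (hφt x hx).norm (Filter.Eventually.of_forall fun k => ?_)
    exact ((hmain k).2.2.1 x hx).trans (hbdd k)
  -- uniform convergence on the ball
  have hunif : TendstoUniformlyOn F φ Filter.atTop B := by
    rw [Metric.tendstoUniformlyOn_iff]
    intro ε hε
    have htail : Filter.Tendsto (fun N => YL - Ym N) Filter.atTop (nhds 0) := by
      have := hYLt.const_sub YL
      simpa using this
    filter_upwards [(tendsto_order.1 htail).2 ε hε] with N hN x hxB
    have hx : ‖x‖ < Xstar := by simpa [hB, Metric.mem_ball, dist_eq_norm] using hxB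
    have hbound : ‖φ x - F N x‖ ≤ YL - Ym N := by
      have h1 : Filter.Tendsto (fun M => ‖F M x - F N x‖) Filter.atTop
          (nhds ‖φ x - F N x‖) := ((hφt x hx).sub tendsto_const_nhds).norm
      refine le_of_tendsto h1 ?_
      filter_upwards [Filter.eventually_ge_atTop N] with M hM
      exact (hFd x hx N M hM).trans (by linarith [hYmYL M])
    calc dist (φ x) (F N x) = ‖φ x - F N x‖ := by rw [dist_eq_norm]
      _ ≤ YL - Ym N := hbound
      _ < ε := hN
  -- analyticity of φ on the ball
  have hφdiff : DifferentiableOn ℂ φ B := by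
    refine hunif.tendstoLocallyUniformlyOn.differentiableOn ?_ Metric.isOpen_ball
    exact Filter.Eventually.of_forall fun k => (hmain k).1
  have hφan : AnalyticOnNhd ℂ φ B := hφdiff.analyticOnNhd Metric.isOpen_ball
  -- φ 0 = 0
  have h0ball : ‖(0 : ℂ)‖ < Xstar := by simpa using hXstar
  have hφ0 : φ 0 = 0 := by
    have hc : (fun k => F k 0) = fun _ => (0 : ℂ) := funext fun k => (hmain k).2.1
    exact tendsto_nhds_unique (hφt 0 h0ball) (by rw [hc]; exact tendsto_const_nhds)
  -- fixed-point property
  refine ⟨φ, hφan, hφ0, fun x hx => ⟨?_, hφb x hx⟩⟩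
  have h1 : Filter.Tendsto (fun k => F (k + 1) x) Filter.atTop (nhds (φ x)) :=
    (hφt x hx).comp (Filter.tendsto_add_atTop_nat 1)
  have h2 : Filter.Tendsto (fun k => psiFun a x (F k x)) Filter.atTop
      (nhds (psiFun a x (φ x))) := by
    have hz : Filter.Tendsto (fun k => ‖F k x - φ x‖) Filter.atTop (nhds 0) := by
      have h0 : Filter.Tendsto (fun k => F k x - φ x) Filter.atTop (nhds (φ x - φ x)) :=
        (hφt x hx).sub tendsto_const_nhds
      simpa using h0.norm
    have hz2 : Filter.Tendsto (fun k => K * ‖F k x - φ x‖) Filter.atTop (nhds 0) := by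
      have := hz.const_mul K
      simpa using this
    have hz3 : Filter.Tendsto (fun k => psiFun a x (F k x) - psiFun a x (φ x))
        Filter.atTop (nhds 0) := by
      refine squeeze_zero_norm (fun k => ?_) hz2
      exact hlip x (F k x) (φ x) hx.le (((hmain k).2.2.1 x hx).trans (hbdd k)) (hφb x hx)
    have := hz3.add_const (psiFun a x (φ x))
    simpa using this
  have h1' : Filter.Tendsto (fun k => psiFun a x (F k x)) Filter.atTop (nhds (φ x)) := by
    have : (fun k => F (k + 1) x) = fun k => psiFun a x (F k x) := funext fun k => hFS k x
    rwa [this] at h1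
  exact tendsto_nhds_unique h1' h2
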